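/- Let Q, M, R̂ be random variables with Q ≥ 0 and M > 0 a.s., R = Q + M·R̂, and suppose: (1) lim_{t→∞} t^κ P(M R̂ > t) = K exists in (0, ∞) for some κ > 0; (2) E(Q^β) < ∞ for some β > κ. Then lim_{t→∞} t^κ P(R > t) = K. -/

import Mathlib

open Filter MeasureTheory

/-- if `R = Q + M·R̂` with `Q ≥ 0`, `M > 0` a.s.,
`t^κ P(M R̂ > t) → K ∈ (0,∞)` and `E(Q^β) < ∞` for some `β > κ`, then
`t^κ P(R > t) → K`. -/
theorem stmt_10 {Ω : Type*} [MeasurableSpace Ω] (μ : Measure Ω) [IsProbabilityMeasure μ]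
    (Q M Rh : Ω → ℝ)
    (hQ : ∀ᵐ ω ∂μ, 0 ≤ Q ω) (hM : ∀ᵐ ω ∂μ, 0 < M ω)
    (κ K : ℝ) (hκ : 0 < κ) (hK : 0 < K)
    (hlim : Tendsto (fun t : ℝ => t ^ κ * (μ {ω | t < M ω * Rh ω}).toReal)
      atTop (nhds K))
    (β : ℝ) (hβ : κ < β) (hQβ : Integrable (fun ω => Q ω ^ β) μ) :
    Tendsto (fun t : ℝ => t ^ κ * (μ {ω | t < Q ω + M ω * Rh ω}).toReal)
      atTop (nhds K) := by
  have hβ0 : (0:ℝ) < β := hκ.trans hβ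
  set α : ℝ := (κ/β + 1)/2 with hα
  have hαβlt : κ/β < 1 := (div_lt_one hβ0).2 hβ
  have hα1 : α < 1 := by rw [hα]; linarith
  have hα0 : 0 < α := by
    have : 0 < κ/β := div_pos hκ hβ0
    rw [hα]; linarith
  have hκαβ : κ < α * β := by
    have h : κ/β < α := by rw [hα]; linarith
    calc κ = κ/β * β := by field_simp
    _ < α * β := mul_lt_mul_of_pos_right h hβ0
  set I : ℝ := ∫ ω, Q ω ^ β ∂μ with hI
  have hQβnn : 0 ≤ᵐ[μ] fun ω => Q ω ^ β :=
    hQ.mono fun ω h => Real.rpow_nonneg h β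
  have hInn : 0 ≤ I := integral_nonneg_of_ae hQβnn
  -- Markov bound
  have markov : ∀ t : ℝ, 1 < t →
      (μ {ω | t ^ α ≤ Q ω}).toReal ≤ I / t ^ (α * β) := by
    intro t ht
    have ht0 : (0:ℝ) < t := lt_trans one_pos ht
    have htα : (0:ℝ) < t ^ α := Real.rpow_pos_of_pos ht0 α
    have htαβ : (0:ℝ) < t ^ (α * β) := Real.rpow_pos_of_pos ht0 _
    have hsub : μ {ω | t ^ α ≤ Q ω} ≤
        μ {ω | ENNReal.ofReal (t ^ (α * β)) ≤ ENNReal.ofReal (Q ω ^ β)} := by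
      apply measure_mono_ae
      filter_upwards [hQ] with ω hω hmem
      have : t ^ (α * β) ≤ Q ω ^ β := by
        rw [Real.rpow_mul ht0.le]
        exact Real.rpow_le_rpow htα.le hmem hβ0.le
      exact ENNReal.ofReal_le_ofReal this
    have hmk := mul_meas_ge_le_lintegral₀
      (μ := μ) (f := fun ω => ENNReal.ofReal (Q ω ^ β))
      (hQβ.aestronglyMeasurable.aemeasurable.ennreal_ofReal)
      (ENNReal.ofReal (t ^ (α * β)))
    rw [← ofReal_integral_eq_lintegral_ofReal hQβ hQβnn] at hmk
    have h2 : ENNReal.ofReal (t ^ (α * β)) * μ {ω | t ^ α ≤ Q ω} ≤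
        ENNReal.ofReal I :=
      le_trans (mul_le_mul_right hsub _) hmk
    have h3 := ENNReal.toReal_mono (by simp) h2
    rw [ENNReal.toReal_mul, ENNReal.toReal_ofReal htαβ.le,
      ENNReal.toReal_ofReal hInn] at h3
    rw [le_div_iff₀ htαβ]
    linarith [h3]
  -- lower bound
  have hlow : ∀ᶠ t : ℝ in atTop,
      t ^ κ * (μ {ω | t < M ω * Rh ω}).toReal ≤
      t ^ κ * (μ {ω | t < Q ω + M ω * Rh ω}).toReal := by
    filter_upwards [eventually_gt_atTop (0:ℝ)] with t ht
    apply mul_le_mul_of_nonneg_left _ (Real.rpow_nonneg ht.le κ)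
    apply ENNReal.toReal_mono (measure_ne_top μ _)
    apply measure_mono_ae
    filter_upwards [hQ] with ω hω hmem
    have h1 : t < M ω * Rh ω := hmem
    show t < Q ω + M ω * Rh ω
    linarith
  -- eventual positivity facts
  have hev : ∀ᶠ t : ℝ in atTop, 1 < t ∧ t ^ (α - 1) ≤ 1/2 := by
    have h1 : Tendsto (fun t : ℝ => t ^ (α - 1)) atTop (nhds 0) := by
      have := tendsto_rpow_neg_atTop (y := 1 - α) (by linarith)
      simpa [neg_sub] using this
    filter_upwards [eventually_gt_atTop (1:ℝ),
      h1.eventually_le_const (by norm_num : (0:ℝ) < 1/2)] with t h1 h2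
    exact ⟨h1, h2⟩
  have hpow : ∀ t : ℝ, 0 < t → t ^ α = t ^ (α - 1) * t := by
    intro t ht0
    rw [← Real.rpow_add_one ht0.ne' (α - 1)]; ring_nf
  have key : ∀ t : ℝ, 1 < t → t ^ (α - 1) ≤ 1/2 → t/2 ≤ t - t ^ α := by
    intro t ht hhalf
    have ht0 : (0:ℝ) < t := lt_trans one_pos ht
    have := hpow t ht0
    nlinarith [Real.rpow_nonneg ht0.le (α - 1)]
  have hsubtend : Tendsto (fun t : ℝ => t - t ^ α) atTop atTop := by
    have hd : Tendsto (fun t : ℝ => t/2) atTop atTop :=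
      tendsto_id.atTop_div_const (by norm_num)
    apply tendsto_atTop_mono' atTop _ hd
    filter_upwards [hev] with t ht
    exact key t ht.1 ht.2
  have h2 : Tendsto (fun t : ℝ => (t - t ^ α) ^ κ *
      (μ {ω | t - t ^ α < M ω * Rh ω}).toReal) atTop (nhds K) := hlim.comp hsubtend
  have h3 : Tendsto (fun t : ℝ => (t / (t - t ^ α)) ^ κ) atTop (nhds 1) := by
    have hratio : Tendsto (fun t : ℝ => t / (t - t ^ α)) atTop (nhds 1) := by
      have hu : Tendsto (fun t : ℝ => (1 - t ^ (α - 1))⁻¹) atTop (nhds 1) := by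
        have h0 := tendsto_rpow_neg_atTop (y := 1 - α) (by linarith : (0:ℝ) < 1 - α)
        have h1 : Tendsto (fun t : ℝ => 1 - t ^ (α - 1)) atTop (nhds 1) := by
          have h := (tendsto_const_nhds (x := (1:ℝ)) (f := atTop (α := ℝ))).sub h0
          simpa [neg_sub] using h
        simpa using h1.inv₀ (by norm_num)
      apply hu.congr'
      filter_upwards [hev] with t ht
      have ht0 : (0:ℝ) < t := lt_trans one_pos ht.1
      have heq : t - t ^ α = t * (1 - t ^ (α - 1)) := by
        rw [hpow t ht0]; ring
      rw [heq, div_mul_eq_div_div, div_self ht0.ne', one_div]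
    have hc : ContinuousAt (fun x : ℝ => x ^ κ) 1 :=
      Real.continuousAt_rpow_const 1 κ (Or.inl one_ne_zero)
    have := hc.tendsto.comp hratio
    simpa [Function.comp_def] using this
  have h4 : Tendsto (fun t : ℝ => I * t ^ (κ - α * β)) atTop (nhds 0) := by
    have := tendsto_rpow_neg_atTop (y := α * β - κ) (by linarith)
    have h := (tendsto_const_nhds (x := I) (f := atTop (α := ℝ))).mul this
    rw [mul_zero] at h
    simpa [neg_sub] using h
  -- upper bound function tends to K
  have hupperlim : Tendsto (fun t : ℝ =>
      (t / (t - t ^ α)) ^ κ * ((t - t ^ α) ^ κ *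
        (μ {ω | t - t ^ α < M ω * Rh ω}).toReal) + I * t ^ (κ - α * β))
      atTop (nhds K) := by
    have := (h3.mul h2).add h4
    simpa using this
  -- eventual upper bound
  have hupp : ∀ᶠ t : ℝ in atTop,
      t ^ κ * (μ {ω | t < Q ω + M ω * Rh ω}).toReal ≤
      (t / (t - t ^ α)) ^ κ * ((t - t ^ α) ^ κ *
        (μ {ω | t - t ^ α < M ω * Rh ω}).toReal) + I * t ^ (κ - α * β) := by
    filter_upwards [hev] with t ht
    have ht0 : (0:ℝ) < t := lt_trans one_pos ht.1
    have hts : (0:ℝ) < t - t ^ α := lt_of_lt_of_le (by linarith) (key t ht.1 ht.2)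
    have hκt : (0:ℝ) ≤ t ^ κ := Real.rpow_nonneg ht0.le κ
    have hsplit : μ {ω | t < Q ω + M ω * Rh ω} ≤
        μ {ω | t - t ^ α < M ω * Rh ω} + μ {ω | t ^ α ≤ Q ω} := by
      refine le_trans (measure_mono ?_) (measure_union_le _ _)
      intro ω hω
      simp only [Set.mem_setOf_eq, Set.mem_union] at *
      by_cases hq : t ^ α ≤ Q ω
      · exact Or.inr hq
      · push_neg at hq; left; linarith
    have hsplit' : (μ {ω | t < Q ω + M ω * Rh ω}).toReal ≤
        (μ {ω | t - t ^ α < M ω * Rh ω}).toReal + (μ {ω | t ^ α ≤ Q ω}).toReal := by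
      rw [← ENNReal.toReal_add (measure_ne_top μ _) (measure_ne_top μ _)]
      exact ENNReal.toReal_mono (by simp [ENNReal.add_ne_top, measure_ne_top]) hsplit
    have hfact : t ^ κ = (t / (t - t ^ α)) ^ κ * (t - t ^ α) ^ κ := by
      rw [← Real.mul_rpow (by positivity) hts.le, div_mul_cancel₀ _ hts.ne']
    have hterm1 : t ^ κ * (μ {ω | t - t ^ α < M ω * Rh ω}).toReal =
        (t / (t - t ^ α)) ^ κ * ((t - t ^ α) ^ κ *
          (μ {ω | t - t ^ α < M ω * Rh ω}).toReal) := by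
      rw [hfact]; ring
    have hterm2 : t ^ κ * (μ {ω | t ^ α ≤ Q ω}).toReal ≤ I * t ^ (κ - α * β) := by
      have := mul_le_mul_of_nonneg_left (markov t ht.1) hκt
      refine le_trans this (le_of_eq ?_)
      rw [Real.rpow_sub ht0]
      field_simp
    calc t ^ κ * (μ {ω | t < Q ω + M ω * Rh ω}).toReal
        ≤ t ^ κ * ((μ {ω | t - t ^ α < M ω * Rh ω}).toReal +
            (μ {ω | t ^ α ≤ Q ω}).toReal) := mul_le_mul_of_nonneg_left hsplit' hκt
      _ = t ^ κ * (μ {ω | t - t ^ α < M ω * Rh ω}).toReal +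
            t ^ κ * (μ {ω | t ^ α ≤ Q ω}).toReal := by ring
      _ ≤ _ := by rw [hterm1]; exact add_le_add_right hterm2 _
  exact tendsto_of_tendsto_of_tendsto_of_le_of_le' hlim hupperlim hlow hupp
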